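/- Let F be a field of characteristic zero, K a finite-dimensional field extension of F, σ an F-algebra automorphism of K, and n ≥ 1 an integer such that the powers σ^0, σ^1, …, σ^{n−1} are pairwise distinct. Let d_1, …, d_{n−1} be integers such that for every y ∈ K with Tr_{K/F}(y) = 0 one has (d_1 + ⋯ + d_{n−1})·y = d_1·σ(y) + d_2·σ²(y) + ⋯ + d_{n−1}·σ^{n−1}(y). Then d_1 = d_2 = ⋯ = d_{n−1} = 0. -/

import Mathlib

/-- Independence of characters: let `K/F` be a finite extension of fields of characteristic zero,
`σ` an `F`-algebra automorphism of `K` whose powers `σ^0, …, σ^{n−1}` are pairwise distinct, and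
`d_1, …, d_{n−1}` integers with `(∑ d_i)·y = ∑ d_i·σ^i(y)` for every trace-zero `y ∈ K`.
Then all `d_i` vanish. -/
theorem eq_zero_of_trace_zero_relation
    {F K : Type*} [Field F] [CharZero F] [Field K] [Algebra F K] [FiniteDimensional F K]
    (σ : K ≃ₐ[F] K) (n : ℕ) (hn : 1 ≤ n)
    (hdist : ∀ i j : ℕ, i < n → j < n → σ ^ i = σ ^ j → i = j)
    (d : ℕ → ℤ)
    (h : ∀ y : K, Algebra.trace F K y = 0 →
      (∑ i ∈ Finset.Ico 1 n, d i) • y = ∑ i ∈ Finset.Ico 1 n, d i • (σ ^ i) y) :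
    ∀ i ∈ Finset.Ico 1 n, d i = 0 := by
  classical
  have hK : CharZero K := charZero_of_injective_algebraMap (algebraMap F K).injective
  have hN : (Module.finrank F K : F) ≠ 0 := by
    exact_mod_cast Nat.cast_ne_zero.2 (Module.finrank_pos.ne')
  -- the relation holds for all x
  have hall : ∀ x : K, (∑ i ∈ Finset.Ico 1 n, d i) • x
      = ∑ i ∈ Finset.Ico 1 n, d i • (σ ^ i) x := by
    intro x
    set a : F := Algebra.trace F K x / (Module.finrank F K : F) with ha
    have htr : Algebra.trace F K (x - algebraMap F K a) = 0 := by
      rw [map_sub, Algebra.trace_algebraMap, ha, nsmul_eq_mul]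
      field_simp
      simp
    have hrel := h _ htr
    have hfix : ∀ i : ℕ, (σ ^ i) (algebraMap F K a) = algebraMap F K a := fun i =>
      (σ ^ i).commutes a
    simp only [smul_sub, map_sub, hfix, Finset.sum_sub_distrib] at hrel
    have hconst : (∑ i ∈ Finset.Ico 1 n, d i) • (algebraMap F K a)
        = ∑ i ∈ Finset.Ico 1 n, d i • (algebraMap F K a) := by
      rw [Finset.sum_smul]
    rw [← hconst] at hrel
    exact sub_left_injective hrel
  -- set up the characters
  set g : ℕ → (K →* K) := fun i => ((σ ^ i : K ≃ₐ[F] K) : K →+* K).toMonoidHom with hg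
  have hginj : Function.Injective (fun i : Fin n => g i.val) := by
    intro i j hij
    have : σ ^ (i : ℕ) = σ ^ (j : ℕ) := by
      ext x
      exact congrFun (congrArg (fun f : K →* K => (f : K → K)) hij) x
    exact Fin.ext (hdist i j i.isLt j.isLt this)
  have hli : LinearIndependent K (fun i : Fin n => ((g i.val : K → K))) :=
    (linearIndependent_monoidHom K K).comp (fun i : Fin n => g i.val) hginj
  -- coefficients
  set c : ℕ → K := fun i => if i = 0 then ((∑ i ∈ Finset.Ico 1 n, d i : ℤ) : K)
    else -((d i : ℤ) : K) with hc
  have hsum : ∑ i : Fin n, c i.val • (g i.val : K → K) = 0 := by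
    funext x
    simp only [Finset.sum_apply, Pi.smul_apply, Pi.zero_apply]
    rw [Fin.sum_univ_eq_sum_range (fun i => c i • (g i) x) n]
    rw [Finset.range_eq_Ico, ← Finset.sum_Ico_consecutive _ (Nat.zero_le 1) hn]
    have h0 : ∑ i ∈ Finset.Ico 0 1, c i • (g i) x = (∑ i ∈ Finset.Ico 1 n, d i : ℤ) • x := by
      simp [hc, hg, zsmul_eq_mul, smul_eq_mul]
    have h1 : ∑ i ∈ Finset.Ico 1 n, c i • (g i) x
        = -∑ i ∈ Finset.Ico 1 n, d i • (σ ^ i) x := by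
      rw [← Finset.sum_neg_distrib]
      refine Finset.sum_congr rfl fun i hi => ?_
      have : i ≠ 0 := by
        have := (Finset.mem_Ico.mp hi).1; omega
      simp [hc, hg, this, zsmul_eq_mul, smul_eq_mul]
    rw [h0, h1, hall x, add_neg_cancel]
  have hc0 : ∀ i : Fin n, c i.val = 0 := Fintype.linearIndependent_iff.mp hli _ hsum
  intro i hi
  obtain ⟨h1, h2⟩ := Finset.mem_Ico.mp hi
  have := hc0 ⟨i, h2⟩
  have hne : i ≠ 0 := by omega
  rw [hc] at this
  simp only [hne, if_false, neg_eq_zero] at this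
  exact_mod_cast this
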